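/- Let E ⊆ F be a field extension and let n = n_1 + ⋯ + n_ℓ be a partition of a positive integer n. Let f : F^n → F^n be an additive bijection which is semilinear, i.e., there is a field automorphism τ of F with τ(E) = E such that f(λ v) = τ(λ) f(v) for all λ ∈ F and v ∈ F^n. Then f is an isometry for the sum-rank distance d_SR (i.e., d_SR(f(u), f(v)) = d_SR(u, v) for all u, v ∈ F^n) if and only if there exist nonzero scalars a_1, …, a_ℓ ∈ F*, invertible matrices M_i ∈ GL(n_i, E) for i = 1, …, ℓ, and a permutation π of {1, …, ℓ} satisfying n_{π(i)} = n_i for all i, such that f((c^(1) | … | c^(ℓ))) = (τ(a_1 c^(π^{-1}(1))) M_1 | … | τ(a_ℓ c^(π^{-1}(ℓ))) M_ℓ) for every c ∈ F^n, where τ is applied entrywise. -/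

import Mathlib

/-- The rank weight of a vector over `F` with respect to the extension `F/E`. -/
noncomputable def rankWt (E : Type*) {F : Type*} [Field E] [Field F] [Algebra E F]
    {N : ℕ} (v : Fin N → F) : ℕ :=
  Module.finrank E (Submodule.span E (Set.range v) : Submodule E F)

/-- The sum-rank weight of `c ∈ F^n` with respect to the partition
`n = n 0 + ⋯ + n (ℓ-1)` and the extension `F/E`. -/
noncomputable def srWtP (E : Type*) {F : Type*} [Field E] [Field F] [Algebra E F]
    {ℓ : ℕ} {n : Fin ℓ → ℕ} (c : (i : Fin ℓ) → Fin (n i) → F) : ℕ :=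
  ∑ i, rankWt E (c i)

open Submodule Module

section Aux
variable {E F : Type*} [Field E] [Field F] [Algebra E F]

lemma rankWt_le_of_forall_mem_span {N r : ℕ} (v : Fin N → F) (u : Fin r → F)
    (h : ∀ m, v m ∈ Submodule.span E (Set.range u)) : rankWt E v ≤ r := by
  haveI := FiniteDimensional.span_of_finite E (Set.finite_range u)
  have hle : Submodule.span E (Set.range v) ≤ Submodule.span E (Set.range u) := by
    rw [Submodule.span_le]; rintro x ⟨m, rfl⟩; exact h m
  exact (Submodule.finrank_mono hle).trans (by simpa [Set.finrank] using finrank_range_le_card (R := E) u)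

lemma exists_spanning_of_rankWt (N : ℕ) (v : Fin N → F) :
    ∃ u : Fin (rankWt E v) → F, ∀ m, v m ∈ Submodule.span E (Set.range u) := by
  haveI := FiniteDimensional.span_of_finite E (Set.finite_range v)
  set p := Submodule.span E (Set.range v) with hp
  let b := Module.finBasis E p
  refine ⟨fun k => (b k : F), fun m => ?_⟩
  have hv : v m ∈ p := Submodule.subset_span ⟨m, rfl⟩
  have h2 : Submodule.map p.subtype (Submodule.span E (Set.range b)) = p := by
    rw [b.span_eq, Submodule.map_top, Submodule.range_subtype]
  have h1 : Submodule.span E (Set.range fun k => (b k : F))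
      = Submodule.map p.subtype (Submodule.span E (Set.range b)) := by
    rw [Submodule.map_span]
    congr 1
    ext x
    constructor
    · rintro ⟨k, rfl⟩; exact ⟨b k, ⟨k, rfl⟩, rfl⟩
    · rintro ⟨y, ⟨k, rfl⟩, rfl⟩; exact ⟨k, rfl⟩
  exact le_of_eq (h1.trans h2).symm hv

lemma rankWt_eq_zero_iff {N : ℕ} (v : Fin N → F) : rankWt E v = 0 ↔ v = 0 := by
  haveI := FiniteDimensional.span_of_finite E (Set.finite_range v)
  constructor
  · intro h
    have : Submodule.span E (Set.range v) = ⊥ := Submodule.finrank_eq_zero.mp h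
    funext m
    have : v m ∈ (⊥ : Submodule E F) := this ▸ Submodule.subset_span ⟨m, rfl⟩
    simpa using this
  · rintro rfl
    have : Submodule.span E (Set.range (0 : Fin N → F)) = ⊥ := by
      rw [Submodule.span_eq_bot]
      rintro x ⟨m, rfl⟩; rfl
    rw [rankWt, this, finrank_bot]

end Aux

section Aux2
variable {E F : Type*} [Field E] [Field F] [Algebra E F]

lemma rankWt_anchor {N : ℕ} (v : Fin N → F) (h : rankWt E v ≤ 1) {m0 : Fin N}
    (h0 : v m0 ≠ 0) : ∃ e : Fin N → E, ∀ m, v m = algebraMap E F (e m) * v m0 := by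
  haveI := FiniteDimensional.span_of_finite E (Set.finite_range v)
  have hle : Submodule.span E {v m0} ≤ Submodule.span E (Set.range v) :=
    Submodule.span_mono (Set.singleton_subset_iff.mpr ⟨m0, rfl⟩)
  have h1 : finrank E (Submodule.span E {v m0}) = 1 := finrank_span_singleton h0
  have heq : Submodule.span E {v m0} = Submodule.span E (Set.range v) :=
    Submodule.eq_of_le_of_finrank_le hle (by rw [h1]; exact h)
  have hmem : ∀ m, v m ∈ Submodule.span E {v m0} := fun m =>
    heq.symm ▸ Submodule.subset_span ⟨m, rfl⟩
  choose e he using fun m => Submodule.mem_span_singleton.mp (hmem m)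
  exact ⟨e, fun m => by rw [← he m, Algebra.smul_def]⟩

lemma rankWt_le_one_of_coords {N : ℕ} (v : Fin N → F)
    (h : ∀ m, ∃ e : E, v m = algebraMap E F e) : rankWt E v ≤ 1 := by
  refine rankWt_le_of_forall_mem_span v (fun _ : Fin 1 => (1 : F)) (fun m => ?_)
  obtain ⟨e, he⟩ := h m
  have : v m = e • (1 : F) := by rw [he, Algebra.smul_def, mul_one]
  rw [this]
  exact Submodule.smul_mem _ _ (Submodule.subset_span ⟨0, rfl⟩)

lemma rankWt_mul_right_le_one {N : ℕ} (e : Fin N → E) (lam : F) :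
    rankWt E (fun m => algebraMap E F (e m) * lam) ≤ 1 := by
  refine rankWt_le_of_forall_mem_span _ (fun _ : Fin 1 => lam) (fun m => ?_)
  have : algebraMap E F (e m) * lam = e m • lam := (Algebra.smul_def _ _).symm
  rw [this]
  exact Submodule.smul_mem _ _ (Submodule.subset_span ⟨0, rfl⟩)

lemma tau_mem_span {S : Set F} (τ : F ≃+* F)
    (hτ : ∀ y ∈ Set.range (algebraMap E F), τ y ∈ Set.range (algebraMap E F))
    {x : F} (hx : x ∈ Submodule.span E S) : τ x ∈ Submodule.span E (τ '' S) := by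
  induction hx using Submodule.span_induction with
  | mem y hy => exact Submodule.subset_span ⟨y, hy, rfl⟩
  | zero => simpa using Submodule.zero_mem _
  | add a b _ _ ha hb => rw [map_add]; exact Submodule.add_mem _ ha hb
  | smul a y _ hy =>
      have : τ (a • y) = τ (algebraMap E F a) * τ y := by
        rw [Algebra.smul_def, map_mul]
      obtain ⟨e, he⟩ := hτ (algebraMap E F a) ⟨a, rfl⟩
      rw [this, ← he, ← Algebra.smul_def]
      exact Submodule.smul_mem _ _ hy

lemma rankWt_tau_le {N : ℕ} (τ : F ≃+* F)
    (hτ : ∀ y ∈ Set.range (algebraMap E F), τ y ∈ Set.range (algebraMap E F))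
    (v : Fin N → F) : rankWt E (fun m => τ (v m)) ≤ rankWt E v := by
  obtain ⟨u, hu⟩ := exists_spanning_of_rankWt (E := E) N v
  refine rankWt_le_of_forall_mem_span _ (fun k => τ (u k)) (fun m => ?_)
  have := tau_mem_span (E := E) τ hτ (hu m)
  rwa [show τ '' Set.range u = Set.range fun k => τ (u k) from by
    rw [← Set.range_comp]; rfl] at this

lemma rankWt_tau (τ : F ≃+* F)
    (hτE : τ '' Set.range (algebraMap E F) = Set.range (algebraMap E F))
    {N : ℕ} (v : Fin N → F) : rankWt E (fun m => τ (v m)) = rankWt E v := by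
  have h1 : ∀ y ∈ Set.range (algebraMap E F), τ y ∈ Set.range (algebraMap E F) := by
    intro y hy; rw [← hτE]; exact ⟨y, hy, rfl⟩
  have h2 : ∀ y ∈ Set.range (algebraMap E F), τ.symm y ∈ Set.range (algebraMap E F) := by
    intro y hy
    rw [← hτE] at hy
    obtain ⟨z, hz, rfl⟩ := hy
    simpa using hz
  refine le_antisymm (rankWt_tau_le τ h1 v) ?_
  have := rankWt_tau_le (E := E) τ.symm h2 (fun m => τ (v m))
  simpa using this

lemma rankWt_const_mul {N : ℕ} (a : F) (ha : a ≠ 0) (v : Fin N → F) :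
    rankWt E (fun m => a * v m) = rankWt E v := by
  have key : ∀ (b : F) (w : Fin N → F), rankWt E (fun m => b * w m) ≤ rankWt E w := by
    intro b w
    obtain ⟨u, hu⟩ := exists_spanning_of_rankWt (E := E) N w
    refine rankWt_le_of_forall_mem_span _ (fun k => b * u k) (fun m => ?_)
    have : (fun x => b * x) = (LinearMap.mulLeft E b : F →ₗ[E] F) := rfl
    have hmap := Submodule.mem_map_of_mem (f := LinearMap.mulLeft E b) (hu m)
    rw [Submodule.map_span] at hmap
    rwa [show (LinearMap.mulLeft E b) '' Set.range u = Set.range fun k => b * u k from by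
      rw [← Set.range_comp]; rfl] at hmap
  refine le_antisymm (key a v) ?_
  have := key a⁻¹ (fun m => a * v m)
  simp only [← mul_assoc, inv_mul_cancel₀ ha, one_mul] at this
  exact this

end Aux2

section Aux3
variable {E F : Type*} [Field E] [Field F] [Algebra E F]

lemma rankWt_le_of_coords_mem {N N' : ℕ} (w : Fin N' → F) (v : Fin N → F)
    (h : ∀ j, w j ∈ Submodule.span E (Set.range v)) : rankWt E w ≤ rankWt E v := by
  obtain ⟨u, hu⟩ := exists_spanning_of_rankWt (E := E) N v
  have hsub : Submodule.span E (Set.range v) ≤ Submodule.span E (Set.range u) := by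
    rw [Submodule.span_le]; rintro x ⟨m, rfl⟩; exact hu m
  exact rankWt_le_of_forall_mem_span _ u fun j => hsub (h j)

lemma rankWt_vecMul_le {N N' : ℕ} (v : Fin N → F) (B : Matrix (Fin N) (Fin N') E) :
    rankWt E (Matrix.vecMul v (B.map (algebraMap E F))) ≤ rankWt E v := by
  refine rankWt_le_of_coords_mem _ v (fun j => ?_)
  have : Matrix.vecMul v (B.map (algebraMap E F)) j = ∑ k, B k j • v k := by
    simp [Matrix.vecMul, dotProduct, Algebra.smul_def, Matrix.map_apply, mul_comm]
  rw [this]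
  exact Submodule.sum_mem _ fun k _ =>
    Submodule.smul_mem _ _ (Submodule.subset_span ⟨k, rfl⟩)

lemma rankWt_vecMul_eq {N N' : ℕ} (v : Fin N → F) (B : Matrix (Fin N) (Fin N') E)
    (B' : Matrix (Fin N') (Fin N) E) (h1 : B * B' = 1) :
    rankWt E (Matrix.vecMul v (B.map (algebraMap E F))) = rankWt E v := by
  refine le_antisymm (rankWt_vecMul_le v B) ?_
  have hv : Matrix.vecMul (Matrix.vecMul v (B.map (algebraMap E F)))
      (B'.map (algebraMap E F)) = v := by
    rw [Matrix.vecMul_vecMul, ← Matrix.map_mul, h1, Matrix.map_one _ (map_zero _) (map_one _),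
      Matrix.vecMul_one]
  calc rankWt E v = rankWt E (Matrix.vecMul (Matrix.vecMul v (B.map (algebraMap E F)))
      (B'.map (algebraMap E F))) := by rw [hv]
    _ ≤ _ := rankWt_vecMul_le _ B'

end Aux3

section Aux4
variable {E F : Type*} [Field E] [Field F] [Algebra E F] {ℓ : ℕ} {n : Fin ℓ → ℕ}

lemma rankWt_zero {N : ℕ} : rankWt E (0 : Fin N → F) = 0 :=
  (rankWt_eq_zero_iff _).mpr rfl

lemma rankWt_single_one {N : ℕ} (j : Fin N) : rankWt E (Pi.single j (1 : F)) = 1 := by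
  classical
  have hle : rankWt E (Pi.single j (1 : F)) ≤ 1 := by
    refine rankWt_le_one_of_coords _ (fun m => ?_)
    by_cases h : m = j
    · subst h; exact ⟨1, by simp⟩
    · exact ⟨0, by simp [Pi.single_eq_of_ne h]⟩
  have hne : rankWt E (Pi.single j (1 : F)) ≠ 0 := by
    rw [ne_eq, rankWt_eq_zero_iff]
    intro h
    have := congrFun h j
    simp at this
  omega

lemma srWtP_of_support (c : (i : Fin ℓ) → Fin (n i) → F) (i : Fin ℓ)
    (h : ∀ i' ≠ i, c i' = 0) : srWtP E c = rankWt E (c i) := by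
  rw [srWtP]
  refine Finset.sum_eq_single i (fun i' _ hi' => ?_) (by simp)
  rw [h i' hi', rankWt_zero]

lemma exists_block_of_srWtP_one (c : (i : Fin ℓ) → Fin (n i) → F)
    (h : srWtP E c = 1) : ∃ i, rankWt E (c i) = 1 ∧ ∀ i' ≠ i, c i' = 0 := by
  classical
  have hne : ∃ i, rankWt E (c i) ≠ 0 := by
    by_contra hc
    push_neg at hc
    rw [srWtP, Finset.sum_eq_zero (fun i _ => hc i)] at h
    omega
  obtain ⟨i, hi⟩ := hne
  rw [srWtP] at h
  have hsplit := Finset.add_sum_erase Finset.univ (fun i' => rankWt E (c i')) (Finset.mem_univ i)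
  simp only [h] at hsplit
  have h1 : rankWt E (c i) = 1 := by omega
  have h2 : ∑ i' ∈ Finset.univ.erase i, rankWt E (c i') = 0 := by omega
  refine ⟨i, h1, fun i' hi' => ?_⟩
  have := (Finset.sum_eq_zero_iff.mp h2) i' (Finset.mem_erase.mpr ⟨hi', Finset.mem_univ _⟩)
  exact (rankWt_eq_zero_iff _).mp this

lemma two_le_srWtP (c : (i : Fin ℓ) → Fin (n i) → F) {b b' : Fin ℓ} (hbb : b ≠ b')
    (hb : c b ≠ 0) (hb' : c b' ≠ 0) : 2 ≤ srWtP E c := by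
  classical
  have h1 : 1 ≤ rankWt E (c b) := Nat.one_le_iff_ne_zero.mpr
    (fun h => hb ((rankWt_eq_zero_iff _).mp h))
  have h2 : 1 ≤ rankWt E (c b') := Nat.one_le_iff_ne_zero.mpr
    (fun h => hb' ((rankWt_eq_zero_iff _).mp h))
  have hsub : ({b, b'} : Finset (Fin ℓ)) ⊆ Finset.univ := Finset.subset_univ _
  have hle : ∑ i ∈ ({b, b'} : Finset (Fin ℓ)), rankWt E (c i) ≤ ∑ i, rankWt E (c i) :=
    Finset.sum_le_sum_of_subset hsub
  rw [Finset.sum_pair hbb] at hle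
  rw [srWtP]
  omega

end Aux4

section Aux5
variable {E F : Type*} [Field E] [Field F] [Algebra E F] {ℓ : ℕ} {n : Fin ℓ → ℕ}

lemma rankWt_ne_zero_iff {N : ℕ} (v : Fin N → F) : rankWt E v ≠ 0 ↔ v ≠ 0 :=
  not_congr (rankWt_eq_zero_iff v)

lemma rank_one_structure {N : ℕ} (v : Fin N → F) (h : rankWt E v = 1) :
    ∃ (lam : F) (w : Fin N → E), lam ≠ 0 ∧ (∃ m1, w m1 ≠ 0) ∧
      ∀ m, v m = algebraMap E F (w m) * lam := by
  have hv : v ≠ 0 := by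
    rw [← rankWt_ne_zero_iff (E := E)]; omega
  obtain ⟨m0, hm0⟩ := Function.ne_iff.mp hv
  simp only [Pi.zero_apply] at hm0
  obtain ⟨w, hw⟩ := rankWt_anchor v (le_of_eq h) hm0
  refine ⟨v m0, w, hm0, ⟨m0, ?_⟩, hw⟩
  intro hw0
  have := hw m0
  rw [hw0, map_zero, zero_mul] at this
  exact hm0 this

lemma same_block (g : ((i : Fin ℓ) → Fin (n i) → F) ≃+ ((i : Fin ℓ) → Fin (n i) → F))
    (σ : F ≃+* F)
    (hg : ∀ (lam : F) (v : (i : Fin ℓ) → Fin (n i) → F), g (lam • v) = σ lam • g v)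
    (hw : ∀ u, srWtP E (g u) = srWtP E u)
    {u v : (i : Fin ℓ) → Fin (n i) → F} {i b b' : Fin ℓ}
    (hu : srWtP E u = 1) (hv : srWtP E v = 1)
    (hui : ∀ i' ≠ i, u i' = 0) (hvi : ∀ i' ≠ i, v i' = 0)
    (hb : g u b ≠ 0) (hb' : g v b' ≠ 0) : b = b' := by
  classical
  have hu1 : rankWt E (u i) = 1 := by rw [← srWtP_of_support u i hui]; exact hu
  have hv1 : rankWt E (v i) = 1 := by rw [← srWtP_of_support v i hvi]; exact hv
  have hu0 : u i ≠ 0 := by rw [← rankWt_ne_zero_iff (E := E)]; omega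
  have hv0 : v i ≠ 0 := by rw [← rankWt_ne_zero_iff (E := E)]; omega
  obtain ⟨m0, hm0⟩ := Function.ne_iff.mp hu0
  obtain ⟨m1, hm1⟩ := Function.ne_iff.mp hv0
  simp only [Pi.zero_apply] at hm0 hm1
  set α : F := (u i m0)⁻¹ with hα
  set β : F := (v i m1)⁻¹ with hβ
  have hαne : α ≠ 0 := inv_ne_zero hm0
  have hβne : β ≠ 0 := inv_ne_zero hm1
  obtain ⟨e, he⟩ := rankWt_anchor (u i) (le_of_eq hu1) hm0
  obtain ⟨e', he'⟩ := rankWt_anchor (v i) (le_of_eq hv1) hm1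
  set w := α • u + β • v with hwdef
  have hwsupp : ∀ i' ≠ i, w i' = 0 := by
    intro i' hi'
    simp [hwdef, hui i' hi', hvi i' hi']
  have hwle : srWtP E w ≤ 1 := by
    rw [srWtP_of_support w i hwsupp]
    refine rankWt_le_one_of_coords _ (fun m => ?_)
    refine ⟨e m + e' m, ?_⟩
    have h1 : w i m = α * u i m + β * v i m := by simp [hwdef]
    rw [h1, he m, he' m, map_add, hα, hβ]
    field_simp
  have hgw : g w = σ α • g u + σ β • g v := by
    rw [hwdef, map_add, hg, hg]
  -- supports of g u and g v
  obtain ⟨bu, hbu1, hbu⟩ := exists_block_of_srWtP_one (g u) (by rw [hw]; exact hu)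
  obtain ⟨bv, hbv1, hbv⟩ := exists_block_of_srWtP_one (g v) (by rw [hw]; exact hv)
  have hbbu : b = bu := by
    by_contra hne; exact hb (hbu b hne)
  have hbbv : b' = bv := by
    by_contra hne; exact hb' (hbv b' hne)
  subst hbbu; subst hbbv
  by_contra hne
  have hgwb : g w b ≠ 0 := by
    rw [hgw]
    have : g v b = 0 := hbv b hne
    simp only [Pi.add_apply, Pi.smul_apply, this, smul_zero, add_zero]
    intro hcon
    rcases smul_eq_zero.mp hcon with h | h
    · exact (map_ne_zero σ).mpr hαne h
    · exact hb h
  have hgwb' : g w b' ≠ 0 := by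
    rw [hgw]
    have : g u b' = 0 := hbu b' (fun hh => hne hh.symm)
    simp only [Pi.add_apply, Pi.smul_apply, this, smul_zero, zero_add]
    intro hcon
    rcases smul_eq_zero.mp hcon with h | h
    · exact (map_ne_zero σ).mpr hβne h
    · exact hb' h
  have h2 := two_le_srWtP (E := E) (g w) hne hgwb hgwb'
  rw [hw w] at h2
  omega

end Aux5

section Aux6
variable {E F : Type*} [Field E] [Field F] [Algebra E F]

lemma classify_single {N N' : ℕ} (hN : 0 < N)
    (G : (Fin N → F) → (Fin N' → F)) (σ : F ≃+* F)
    (hadd : ∀ w w', G (w + w') = G w + G w')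
    (hsmul : ∀ (lam : F) (w : Fin N → F), G (lam • w) = σ lam • G w)
    (hwt : ∀ w, rankWt E (G w) = rankWt E w)
    (hinj : ∀ w, G w = 0 → w = 0) :
    ∃ (α : F) (B : Matrix (Fin N) (Fin N') E), α ≠ 0 ∧
      ∀ w j, G w j = ∑ k, σ (α * w k) * algebraMap E F (B k j) := by
  classical
  have halg : Function.Injective (algebraMap E F) := (algebraMap E F).injective
  have hrk : ∀ k : Fin N, rankWt E (G (Pi.single k 1)) = 1 := by
    intro k; rw [hwt]; exact rankWt_single_one k
  choose lam wv hlam hwv hform using fun k => rank_one_structure (G (Pi.single k 1)) (hrk k)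
  set k0 : Fin N := ⟨0, hN⟩ with hk0def
  have hsub : ∀ w w' : Fin N → F, G (w - w') = G w - G w' := by
    intro w w'
    have h1 : w - w' = w + (-1 : F) • w' := by
      funext m; simp [sub_eq_add_neg]
    rw [h1, hadd, hsmul]
    simp [sub_eq_add_neg]
  have hdep : ∀ k, ∃ ε : E, ε ≠ 0 ∧ lam k = algebraMap E F ε * lam k0 := by
    intro k
    by_cases hk : k = k0
    · subst hk; exact ⟨1, one_ne_zero, by simp⟩
    by_contra hnot
    push_neg at hnot
    have hindep : ∀ x y : E, algebraMap E F x * lam k + algebraMap E F y * lam k0 = 0 →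
        x = 0 ∧ y = 0 := by
      intro x y hxy
      by_cases hx : x = 0
      · refine ⟨hx, ?_⟩
        rw [hx, map_zero, zero_mul, zero_add] at hxy
        rcases mul_eq_zero.mp hxy with h | h
        · exact halg (by rw [h, map_zero])
        · exact absurd h (hlam k0)
      · exfalso
        have hxF : algebraMap E F x ≠ 0 := fun h0 => hx (halg (by rw [h0, map_zero]))
        have hy : y ≠ 0 := by
          intro hy0
          rw [hy0, map_zero, zero_mul, add_zero] at hxy
          exact hlam k ((mul_eq_zero.mp hxy).resolve_left hxF)
        refine hnot (-y / x) (div_ne_zero (neg_ne_zero.mpr hy) hx) ?_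
        rw [map_div₀, map_neg, div_mul_eq_mul_div, eq_div_iff hxF]
        linear_combination hxy
    have hle1 : rankWt E (G (Pi.single k 1 + Pi.single k0 1)) ≤ 1 := by
      rw [hwt]
      refine rankWt_le_one_of_coords _ (fun m => ?_)
      by_cases h1 : m = k
      · subst h1; exact ⟨1, by simp [Pi.single_eq_of_ne hk]⟩
      · by_cases h2 : m = k0
        · subst h2; exact ⟨1, by simp [Pi.single_eq_of_ne h1]⟩
        · exact ⟨0, by simp [Pi.single_eq_of_ne h1, Pi.single_eq_of_ne h2]⟩
    set v := G (Pi.single k 1 + Pi.single k0 1) with hvdef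
    have hv : ∀ m, v m = algebraMap E F (wv k m) * lam k
        + algebraMap E F (wv k0 m) * lam k0 := by
      intro m
      rw [hvdef, hadd]
      simp only [Pi.add_apply]
      rw [hform k m, hform k0 m]
    obtain ⟨m0, hm0⟩ := hwv k
    have hvm0 : v m0 ≠ 0 := by
      intro h0
      rw [hv m0] at h0
      exact hm0 (hindep _ _ h0).1
    obtain ⟨t, ht⟩ := rankWt_anchor v hle1 hvm0
    have hrel : ∀ m, wv k m = t m * wv k m0 ∧ wv k0 m = t m * wv k0 m0 := by
      intro m
      have e1 := hv m
      have e2 := hv m0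
      have e3 := ht m
      have h0 : algebraMap E F (wv k m - t m * wv k m0) * lam k
          + algebraMap E F (wv k0 m - t m * wv k0 m0) * lam k0 = 0 := by
        rw [map_sub, map_mul, map_sub, map_mul]
        linear_combination -e1 + algebraMap E F (t m) * e2 + e3
      have h2 := hindep _ _ h0
      exact ⟨sub_eq_zero.mp (by linear_combination h2.1),
             sub_eq_zero.mp (by linear_combination h2.2)⟩
    obtain ⟨m1, hm1⟩ := hwv k0
    have hB0 : wv k0 m0 ≠ 0 := by
      intro h0
      apply hm1
      have h3 := (hrel m1).2
      rw [h0, mul_zero] at h3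
      exact h3
    have hAne : algebraMap E F (wv k m0) ≠ 0 := fun h0 => hm0 (halg (by rw [h0, map_zero]))
    set μ : F := (algebraMap E F (wv k0 m0) * lam k0)
        * (algebraMap E F (wv k m0) * lam k)⁻¹ with hμdef
    have hμm : ∀ m, G (Pi.single k0 1) m = μ * G (Pi.single k 1) m := by
      intro m
      rw [hform, hform, (hrel m).1, (hrel m).2, hμdef, map_mul, map_mul]
      rw [eq_comm, mul_comm ((algebraMap E F) (wv k0 m0) * lam k0) _, mul_assoc,
        inv_mul_eq_iff_eq_mul₀ (mul_ne_zero hAne (hlam k))]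
      ring
    have hzero : G ((Pi.single k0 1 : Fin N → F) - σ.symm μ • (Pi.single k 1 : Fin N → F)) = 0 := by
      rw [hsub, hsmul, RingEquiv.apply_symm_apply]
      funext m
      simp [hμm m]
    have hz2 := hinj _ hzero
    have hval : ((Pi.single k0 1 : Fin N → F) - σ.symm μ • (Pi.single k 1 : Fin N → F)) k0 = 1 := by
      simp [Pi.single_eq_of_ne (Ne.symm hk)]
    rw [hz2] at hval
    simp at hval
  choose ε hε hlamε using hdep
  refine ⟨σ.symm (lam k0), fun k j => ε k * wv k j, ?_, ?_⟩
  · exact (map_ne_zero σ.symm).mpr (hlam k0)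
  · intro w j
    have hwsum : w = ∑ k, w k • (Pi.single k 1 : Fin N → F) := by
      funext m
      rw [Finset.sum_apply]
      simp [Pi.single_apply]
    have hGsum : G w = ∑ k, σ (w k) • G (Pi.single k 1) := by
      conv_lhs => rw [hwsum]
      let Gh : (Fin N → F) →+ (Fin N' → F) := AddMonoidHom.mk' G hadd
      show Gh _ = _
      rw [map_sum]
      exact Finset.sum_congr rfl fun k _ => hsmul (w k) _
    rw [hGsum, Finset.sum_apply]
    refine Finset.sum_congr rfl fun k _ => ?_
    rw [Pi.smul_apply, smul_eq_mul, hform, hlamε k, map_mul σ, RingEquiv.apply_symm_apply,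
      map_mul]
    ring

end Aux6

section Aux7
variable {E F : Type*} [Field E] [Field F] [Algebra E F]

lemma exists_inverse {N N' : ℕ} (B : Matrix (Fin N) (Fin N') E)
    (hinj : ∀ c : Fin N → F, Matrix.vecMul c (B.map (algebraMap E F)) = 0 → c = 0)
    (hsurj : ∀ y : Fin N' → F, ∃ c, Matrix.vecMul c (B.map (algebraMap E F)) = y) :
    N = N' ∧ ∃ B' : Matrix (Fin N') (Fin N) E, B * B' = 1 ∧ B' * B = 1 := by
  classical
  set Bf := B.map (algebraMap E F) with hBf
  -- the F-linear map given by vecMul is bijective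
  let L : (Fin N → F) →ₗ[F] (Fin N' → F) :=
    { toFun := fun c => Matrix.vecMul c Bf
      map_add' := fun c c' => by
        funext j
        simp [Matrix.vecMul, dotProduct, add_mul, Finset.sum_add_distrib]
      map_smul' := fun a c => by
        funext j
        simp [Matrix.vecMul, dotProduct, Finset.mul_sum, mul_assoc] }
  have hLbij : Function.Bijective L := by
    constructor
    · intro c c' hcc
      have : Matrix.vecMul (c - c') Bf = 0 := by
        have : L (c - c') = 0 := by rw [map_sub, hcc, sub_self]
        exact this
      have := hinj _ this
      exact sub_eq_zero.mp this
    · intro y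
      obtain ⟨c, hc⟩ := hsurj y
      exact ⟨c, hc⟩
  have hNN : N = N' := by
    have := LinearEquiv.finrank_eq (LinearEquiv.ofBijective L hLbij)
    rwa [Module.finrank_fin_fun, Module.finrank_fin_fun] at this
  refine ⟨hNN, ?_⟩
  set e : Fin N ≃ Fin N' := finCongr hNN with hedef
  set S : Matrix (Fin N') (Fin N') E := B.submatrix e.symm id with hSdef
  have hdet : IsUnit S.det := by
    rw [isUnit_iff_ne_zero]
    intro hdet0
    obtain ⟨x, hx0, hxS⟩ := Matrix.exists_vecMul_eq_zero_iff.mpr hdet0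
    set c : Fin N → F := fun k => algebraMap E F (x (e k)) with hcdef
    have hc : Matrix.vecMul c Bf = 0 := by
      funext j
      have : Matrix.vecMul c Bf j = algebraMap E F (Matrix.vecMul x S j) := by
        simp only [Matrix.vecMul, dotProduct, map_sum, map_mul, hcdef, hBf,
          Matrix.map_apply, hSdef, Matrix.submatrix_apply, id_eq]
        exact Fintype.sum_equiv e
          (fun k => algebraMap E F (x (e k)) * algebraMap E F (B k j))
          (fun k' => algebraMap E F (x k') * algebraMap E F (B (e.symm k') j))
          (fun k => by simp)
      rw [this, hxS]
      simp
    have hc0 := hinj c hc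
    apply hx0
    funext k'
    have := congrFun hc0 (e.symm k')
    simp only [hcdef, Pi.zero_apply] at this
    have := (algebraMap E F).injective (by rw [this, map_zero] : algebraMap E F (x (e (e.symm k'))) = algebraMap E F 0)
    rwa [Equiv.apply_symm_apply] at this
  refine ⟨(S⁻¹).submatrix id e, ?_, ?_⟩
  · ext k k''
    have h1 : (S * S⁻¹) (e k) (e k'') = (1 : Matrix (Fin N') (Fin N') E) (e k) (e k'') := by
      rw [Matrix.mul_nonsing_inv _ hdet]
    simp only [Matrix.mul_apply, hSdef, Matrix.submatrix_apply, id_eq,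
      Equiv.symm_apply_apply] at h1 ⊢
    rw [h1, Matrix.one_apply, Matrix.one_apply]
    simp [e.injective.eq_iff]
  · ext j j'
    have h1 : (S⁻¹ * S) j j' = (1 : Matrix (Fin N') (Fin N') E) j j' := by
      rw [Matrix.nonsing_inv_mul _ hdet]
    simp only [Matrix.mul_apply, hSdef, Matrix.submatrix_apply, id_eq] at h1 ⊢
    rw [← h1]
    exact Fintype.sum_equiv e _ _ (fun k => by rw [Equiv.symm_apply_apply])

end Aux7

section Aux8
variable {E F : Type*} [Field E] [Field F] [Algebra E F] {ℓ : ℕ} {n : Fin ℓ → ℕ}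

lemma single_block_eq_of_ne {i i' : Fin ℓ} (h : i' ≠ i) (w : Fin (n i) → F) :
    (Pi.single i w : (i'' : Fin ℓ) → Fin (n i'') → F) i' = 0 :=
  Pi.single_eq_of_ne (M := fun i'' => Fin (n i'') → F) h w

lemma srWtP_single (i : Fin ℓ) (w : Fin (n i) → F) :
    srWtP E (Pi.single i w : (i' : Fin ℓ) → Fin (n i') → F) = rankWt E w := by
  rw [srWtP_of_support (Pi.single i w) i (fun i' h => single_block_eq_of_ne h w),
    Pi.single_eq_same]

lemma block_mapping (hn : ∀ i, 0 < n i)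
    (g : ((i : Fin ℓ) → Fin (n i) → F) ≃+ ((i : Fin ℓ) → Fin (n i) → F)) (σ : F ≃+* F)
    (hg : ∀ (lam : F) (v : (i : Fin ℓ) → Fin (n i) → F), g (lam • v) = σ lam • g v)
    (hw : ∀ u, srWtP E (g u) = srWtP E u)
    (p : Fin ℓ → Fin ℓ)
    (hp : ∀ i, g (Pi.single i (Pi.single ⟨0, hn i⟩ 1)) (p i) ≠ 0) :
    ∀ (i : Fin ℓ) (w : Fin (n i) → F) (i' : Fin ℓ), i' ≠ p i →
      g (Pi.single i w) i' = 0 := by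
  classical
  have hδwt : ∀ i, srWtP E (Pi.single i (Pi.single ⟨0, hn i⟩ 1) :
      (i' : Fin ℓ) → Fin (n i') → F) = 1 := by
    intro i
    rw [srWtP_single, rankWt_single_one]
  have hkey : ∀ (i : Fin ℓ) (u : (i' : Fin ℓ) → Fin (n i') → F), srWtP E u = 1 →
      (∀ i' ≠ i, u i' = 0) → ∀ i' ≠ p i, g u i' = 0 := by
    intro i u hu hui
    obtain ⟨b, hb1, hb2⟩ := exists_block_of_srWtP_one (g u) (by rw [hw]; exact hu)
    have hgu : g u b ≠ 0 := by
      rw [← rankWt_ne_zero_iff (E := E)]; omega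
    have hbp : b = p i :=
      same_block g σ hg hw hu (hδwt i) hui
        (fun i' h => single_block_eq_of_ne h _) hgu (hp i)
    subst hbp
    exact hb2
  intro i w i' hi'
  have hdecomp : (Pi.single i w : (i'' : Fin ℓ) → Fin (n i'') → F)
      = ∑ j, w j • (Pi.single i (Pi.single j (1:F)) : (i'' : Fin ℓ) → Fin (n i'') → F) := by
    funext i'' m
    rw [Finset.sum_apply, Finset.sum_apply]
    by_cases h : i'' = i
    · subst h
      simp [Pi.single_eq_same, Pi.single_apply]
    · simp [Pi.single_eq_of_ne h]
  have h3 : g (Pi.single i w) = ∑ j, σ (w j) • g (Pi.single i (Pi.single j (1:F))) := by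
    rw [hdecomp, map_sum]
    exact Finset.sum_congr rfl fun j _ => hg (w j) _
  rw [h3, Finset.sum_apply]
  refine Finset.sum_eq_zero fun j _ => ?_
  rw [Pi.smul_apply, hkey i _ (by rw [srWtP_single, rankWt_single_one])
    (fun i'' h => single_block_eq_of_ne h _) i' hi', smul_zero]

end Aux8

/-- A semilinear bijection `f` of `F^n` (additive, with
`f(λv) = τ(λ)f(v)` for a field automorphism `τ` of `F` with `τ(E) = E`) is an
isometry for the sum-rank distance iff it is of the form
`c ↦ (τ(a₁ c^{(π⁻¹(1))}) M₁ | … | τ(a_ℓ c^{(π⁻¹(ℓ))}) M_ℓ)` for nonzero scalars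
`aᵢ ∈ F*`, invertible matrices `Mᵢ` over `E`, and a permutation `π` of the blocks
with `n (π i) = n i`. -/
theorem semilinear_sumRank_isometries (E F : Type*) [Field E] [Field F] [Algebra E F]
    (ℓ : ℕ) (hℓ : 0 < ℓ) (n : Fin ℓ → ℕ) (hn : ∀ i, 0 < n i)
    (f : ((i : Fin ℓ) → Fin (n i) → F) ≃+ ((i : Fin ℓ) → Fin (n i) → F))
    (τ : F ≃+* F) (hτE : τ '' Set.range (algebraMap E F) = Set.range (algebraMap E F))
    (hsemi : ∀ (lam : F) (v : (i : Fin ℓ) → Fin (n i) → F), f (lam • v) = τ lam • f v) :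
    (∀ u v : (i : Fin ℓ) → Fin (n i) → F,
        srWtP E (f u - f v) = srWtP E (u - v))
    ↔ ∃ (a : Fin ℓ → F) (π : Equiv.Perm (Fin ℓ))
        (M : (i : Fin ℓ) → Matrix (Fin (n (π.symm i))) (Fin (n i)) E),
        (∀ i, a i ≠ 0) ∧ (∀ i, n (π i) = n i) ∧
        (∀ i, ∃ M' : Matrix (Fin (n i)) (Fin (n (π.symm i))) E,
            M i * M' = 1 ∧ M' * M i = 1) ∧
        (∀ (c : (i : Fin ℓ) → Fin (n i) → F) (i : Fin ℓ) (j : Fin (n i)),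
            f c i j = ∑ k, τ (a i * c (π.symm i) k) * algebraMap E F (M i k j)) := by
  classical
  constructor
  · intro hiso
    have hW : ∀ u, srWtP E (f u) = srWtP E u := by
      intro u
      have h0 := hiso u 0
      rwa [map_zero, sub_zero, sub_zero] at h0
    have hsemi' : ∀ (lam : F) (v : (i : Fin ℓ) → Fin (n i) → F),
        f.symm (lam • v) = τ.symm lam • f.symm v := by
      intro lam v
      apply f.injective
      rw [f.apply_symm_apply, hsemi, RingEquiv.apply_symm_apply, f.apply_symm_apply]
    have hW' : ∀ u, srWtP E (f.symm u) = srWtP E u := by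
      intro u
      have h1 := hW (f.symm u)
      rw [f.apply_symm_apply] at h1
      exact h1.symm
    have hδwt : ∀ i, srWtP E (Pi.single i (Pi.single ⟨0, hn i⟩ (1:F)) :
        (i' : Fin ℓ) → Fin (n i') → F) = 1 := fun i => by
      rw [srWtP_single, rankWt_single_one]
    have hblockf : ∀ i, ∃ b,
        rankWt E (f (Pi.single i (Pi.single ⟨0, hn i⟩ 1)) b) = 1 ∧
        ∀ i' ≠ b, f (Pi.single i (Pi.single ⟨0, hn i⟩ 1)) i' = 0 :=
      fun i => exists_block_of_srWtP_one _ (by rw [hW]; exact hδwt i)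
    choose p hp1 hp2 using hblockf
    have hblockg : ∀ i, ∃ b,
        rankWt E (f.symm (Pi.single i (Pi.single ⟨0, hn i⟩ 1)) b) = 1 ∧
        ∀ i' ≠ b, f.symm (Pi.single i (Pi.single ⟨0, hn i⟩ 1)) i' = 0 :=
      fun i => exists_block_of_srWtP_one _ (by rw [hW']; exact hδwt i)
    choose q hq1 hq2 using hblockg
    have hpne : ∀ i, f (Pi.single i (Pi.single ⟨0, hn i⟩ 1)) (p i) ≠ 0 := by
      intro i
      have h1 := hp1 i
      rw [← rankWt_ne_zero_iff (E := E)]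
      omega
    have hqne : ∀ i, f.symm (Pi.single i (Pi.single ⟨0, hn i⟩ 1)) (q i) ≠ 0 := by
      intro i
      have h1 := hq1 i
      rw [← rankWt_ne_zero_iff (E := E)]
      omega
    have hmapf := block_mapping hn f τ hsemi hW p hpne
    have hmapg := block_mapping hn f.symm τ.symm hsemi' hW' q hqne
    have hqp : ∀ i, q (p i) = i := by
      intro i
      by_contra hne
      have h1 : f.symm (f (Pi.single i (Pi.single ⟨0, hn i⟩ 1))) i ≠ 0 := by
        rw [f.symm_apply_apply, Pi.single_eq_same]
        intro h0
        have h2 := congrFun h0 (⟨0, hn i⟩ : Fin (n i))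
        rw [Pi.single_eq_same] at h2
        exact one_ne_zero h2
      have h2 : f (Pi.single i (Pi.single ⟨0, hn i⟩ 1)) =
          Pi.single (p i) (f (Pi.single i (Pi.single ⟨0, hn i⟩ 1)) (p i)) := by
        funext i'
        by_cases h : i' = p i
        · subst h; rw [Pi.single_eq_same]
        · rw [single_block_eq_of_ne h, hp2 i i' h]
      rw [h2] at h1
      exact h1 (hmapg (p i) _ i (fun hcon => hne hcon.symm))
    have hpq : ∀ b, p (q b) = b := by
      intro b
      by_contra hne
      have h1 : f (f.symm (Pi.single b (Pi.single ⟨0, hn b⟩ 1))) b ≠ 0 := by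
        rw [f.apply_symm_apply, Pi.single_eq_same]
        intro h0
        have h2 := congrFun h0 (⟨0, hn b⟩ : Fin (n b))
        rw [Pi.single_eq_same] at h2
        exact one_ne_zero h2
      have h2 : f.symm (Pi.single b (Pi.single ⟨0, hn b⟩ 1)) =
          Pi.single (q b) (f.symm (Pi.single b (Pi.single ⟨0, hn b⟩ 1)) (q b)) := by
        funext i'
        by_cases h : i' = q b
        · subst h; rw [Pi.single_eq_same]
        · rw [single_block_eq_of_ne h, hq2 b i' h]
      rw [h2] at h1
      exact h1 (hmapf (q b) _ b (fun hcon => hne hcon.symm))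
    have hGprop : ∀ b : Fin ℓ, ∃ (α : F) (B : Matrix (Fin (n (q b))) (Fin (n b)) E),
        α ≠ 0 ∧ (n (q b) = n b) ∧
        (∃ B' : Matrix (Fin (n b)) (Fin (n (q b))) E, B * B' = 1 ∧ B' * B = 1) ∧
        ∀ (w : Fin (n (q b)) → F) (j : Fin (n b)),
          f (Pi.single (q b) w) b j = ∑ k, τ (α * w k) * algebraMap E F (B k j) := by
      intro b
      set G : (Fin (n (q b)) → F) → (Fin (n b) → F) :=
        fun w => f (Pi.single (q b) w) b with hGdef
      have hsingle_add : ∀ (x y : Fin (n (q b)) → F),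
          (Pi.single (q b) (x + y) : (i : Fin ℓ) → Fin (n i) → F)
            = Pi.single (q b) x + Pi.single (q b) y := by
        intro x y
        funext i'
        by_cases h : i' = q b
        · subst h; simp only [Pi.single_eq_same, Pi.add_apply]
        · simp only [single_block_eq_of_ne h, Pi.add_apply, add_zero]
      have hadd : ∀ w w', G (w + w') = G w + G w' := by
        intro w w'
        show f (Pi.single (q b) (w + w')) b = _
        rw [hsingle_add, map_add]
        rfl
      have hsmulG : ∀ (lam : F) (w : Fin (n (q b)) → F), G (lam • w) = τ lam • G w := by
        intro lam w
        show f (Pi.single (q b) (lam • w)) b = _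
        rw [Pi.single_smul, hsemi]
        rfl
      have hwtG : ∀ w, rankWt E (G w) = rankWt E w := by
        intro w
        have h1 := hW (Pi.single (q b) w)
        rw [srWtP_single] at h1
        rw [← h1, srWtP_of_support (f (Pi.single (q b) w)) b
          (fun i' hi' => hmapf (q b) w i' (by rw [hpq b]; exact hi'))]
      have hinjG : ∀ w, G w = 0 → w = 0 := by
        intro w h0
        have hf0 : f (Pi.single (q b) w) = 0 := by
          funext i'
          by_cases h : i' = b
          · subst h; exact h0
          · exact hmapf (q b) w i' (by rw [hpq b]; exact h)
        have h1 : (Pi.single (q b) w : (i : Fin ℓ) → Fin (n i) → F) = 0 :=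
          f.injective (by rw [hf0, map_zero])
        have h2 := congrFun h1 (q b)
        rwa [Pi.single_eq_same] at h2
      have hsurjG : ∀ y : Fin (n b) → F, ∃ w, G w = y := by
        intro y
        set c := f.symm (Pi.single b y) with hcdef
        have hsupp : ∀ i' ≠ q b, c i' = 0 := fun i' hi' => hmapg b y i' hi'
        have hc : (Pi.single (q b) (c (q b)) : (i : Fin ℓ) → Fin (n i) → F) = c := by
          funext i'
          by_cases h : i' = q b
          · subst h; rw [Pi.single_eq_same]
          · rw [single_block_eq_of_ne h, hsupp i' h]
        refine ⟨c (q b), ?_⟩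
        show f (Pi.single (q b) (c (q b))) b = y
        rw [hc, hcdef, f.apply_symm_apply, Pi.single_eq_same]
      obtain ⟨α, B, hα, hformB⟩ := classify_single (hn (q b)) G τ hadd hsmulG hwtG hinjG
      have hvecMul : ∀ (cv : Fin (n (q b)) → F) (j : Fin (n b)),
          Matrix.vecMul cv (B.map (algebraMap E F)) j = ∑ k, cv k * algebraMap E F (B k j) := by
        intro cv j
        simp [Matrix.vecMul, dotProduct, Matrix.map_apply]
      have hinjM : ∀ cv : Fin (n (q b)) → F,
          Matrix.vecMul cv (B.map (algebraMap E F)) = 0 → cv = 0 := by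
        intro cv h0
        set w : Fin (n (q b)) → F := fun k => α⁻¹ * τ.symm (cv k) with hwdef
        have hτw : ∀ k, τ (α * w k) = cv k := by
          intro k
          rw [hwdef]
          simp only []
          rw [← mul_assoc, mul_inv_cancel₀ hα, one_mul, RingEquiv.apply_symm_apply]
        have hGw : G w = 0 := by
          funext j
          rw [hformB w j]
          have h1 : ∑ k, τ (α * w k) * algebraMap E F (B k j)
              = ∑ k, cv k * algebraMap E F (B k j) :=
            Finset.sum_congr rfl fun k _ => by rw [hτw k]
          rw [h1, ← hvecMul cv j, h0]
        have hw0 := hinjG w hGw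
        funext k
        have h2 := congrFun hw0 k
        rw [hwdef] at h2
        simp only [Pi.zero_apply] at h2 ⊢
        rcases mul_eq_zero.mp h2 with h | h
        · exact absurd h (inv_ne_zero hα)
        · have := (map_eq_zero τ.symm).mp h
          exact this
      have hsurjM : ∀ y : Fin (n b) → F,
          ∃ cv, Matrix.vecMul cv (B.map (algebraMap E F)) = y := by
        intro y
        obtain ⟨w, hw⟩ := hsurjG y
        refine ⟨fun k => τ (α * w k), ?_⟩
        funext j
        rw [hvecMul, ← hformB w j, hw]
      obtain ⟨hNN, B', hB1, hB2⟩ := exists_inverse B hinjM hsurjM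
      exact ⟨α, B, hα, hNN, ⟨B', hB1, hB2⟩, hformB⟩
    choose α B hα hNN hBinv hformB using hGprop
    refine ⟨α, ⟨p, q, hqp, hpq⟩, B, hα, ?_, hBinv, ?_⟩
    · intro i
      have h1 := hNN (p i)
      rw [hqp i] at h1
      exact h1.symm
    · intro c i j
      have hfc : f c i = f (Pi.single (q i) (c (q i))) i := by
        conv_lhs => rw [← Finset.univ_sum_single c]
        rw [map_sum, Finset.sum_apply]
        refine Finset.sum_eq_single (q i) (fun i' _ hi' => ?_) (fun h => absurd (Finset.mem_univ _) h)
        exact hmapf i' (c i') i (fun hcon => hi' (by rw [hcon, hqp i']))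
      rw [congrFun hfc j]
      exact hformB i (c (q i)) j
  · rintro ⟨a, π, M, ha, hnπ, hMinv, hform⟩ u v
    rw [← map_sub f u v]
    set c := u - v with hcdef
    rw [srWtP, srWtP]
    have hblock : ∀ i, rankWt E (f c i) = rankWt E (c (π.symm i)) := by
      intro i
      have h1 : f c i = Matrix.vecMul (fun k => τ (a i * c (π.symm i) k))
          ((M i).map (algebraMap E F)) := by
        funext j
        rw [hform]
        simp [Matrix.vecMul, dotProduct, Matrix.map_apply]
      obtain ⟨M', hM1, hM2⟩ := hMinv i
      rw [h1, rankWt_vecMul_eq _ _ M' hM1,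
        rankWt_tau τ hτE (fun k => a i * c (π.symm i) k)]
      exact rankWt_const_mul (a i) (ha i) _
    calc ∑ i, rankWt E (f c i) = ∑ i, rankWt E (c (π.symm i)) :=
          Finset.sum_congr rfl fun i _ => hblock i
      _ = ∑ i, rankWt E (c i) := Equiv.sum_comp π.symm (fun i => rankWt E (c i))
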